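/- (Lemma 2(v)) Let α < β, let (b_m)_{m≥1} be positive reals with lim_{m→∞} b_m²/m = 0, and let φ₁, φ₂ : ℝ → ℝ be bounded, uniformly continuous functions with φ₁(x) < φ₂(x) for all x ∈ ℝ. For each m ≥ 1 let m_k^{(m)} ≥ 1 (0 ≤ k ≤ m) be positive integers such that min_{0 ≤ k ≤ m} m_k^{(m)} → ∞ as m → ∞. Let J_m = [α b_m, β b_m] and Δ_m = {(x,y) : α b_m ≤ x ≤ β b_m, φ₁(x) ≤ y ≤ φ₂(x)}. Then the bivariate shifted Bernstein–Chlodowsky–Stancu operators applied to the function (x,y) ↦ y² converge to y² uniformly: sup_{(x,y) ∈ Δ_m} |B̃_m^{Cl}[y²; Δ_m](x, y) − y²| → 0 as m → ∞. -/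

import Mathlib

open Finset Filter Real

/-- Shifted Bernstein–Chlodowsky basis polynomial on `J = [αb, βb]`. -/
noncomputable def qt (α β b : ℝ) (m k : ℕ) (x : ℝ) : ℝ :=
  (1 / ((β - α) ^ m * b ^ m)) * (m.choose k : ℝ) * (x - α * b) ^ k * (β * b - x) ^ (m - k)

/-- Basis polynomial `q̃_{n,j}(y; [φ₁(x), φ₂(x)])`. -/
noncomputable def qy (φ₁ φ₂ : ℝ → ℝ) (x : ℝ) (n j : ℕ) (y : ℝ) : ℝ :=
  (n.choose j : ℝ) * ((y - φ₁ x) / (φ₂ x - φ₁ x)) ^ j *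
    ((φ₂ x - y) / (φ₂ x - φ₁ x)) ^ (n - j)

/-- Bivariate shifted Bernstein–Chlodowsky–Stancu operator on the domain `Δ`
bounded by `y = φ₁(x)`, `y = φ₂(x)`, `x = αb`, `x = βb`. -/
noncomputable def BivCl (α β b : ℝ) (φ₁ φ₂ : ℝ → ℝ) (m : ℕ) (mk : ℕ → ℕ)
    (g : ℝ → ℝ → ℝ) (x y : ℝ) : ℝ :=
  ∑ k ∈ Finset.range (m + 1), ∑ j ∈ Finset.range (mk k + 1),
    g ((β - α) * b * ((k : ℝ) / m) + α * b)
      ((φ₂ ((β - α) * b * ((k : ℝ) / m) + α * b) - φ₁ ((β - α) * b * ((k : ℝ) / m) + α * b)) *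
          ((j : ℝ) / mk k) + φ₁ ((β - α) * b * ((k : ℝ) / m) + α * b)) *
      qt α β b m k x * qy φ₁ φ₂ x (mk k) j y



noncomputable def Bb (n k : ℕ) (t : ℝ) : ℝ := (n.choose k : ℝ) * t ^ k * (1 - t) ^ (n - k)

lemma Bb_eq_eval (n k : ℕ) (t : ℝ) :
    Bb n k t = (bernsteinPolynomial ℝ n k).eval t := by
  simp [Bb, bernsteinPolynomial]

lemma Bb_nonneg (n k : ℕ) {t : ℝ} (h0 : 0 ≤ t) (h1 : t ≤ 1) : 0 ≤ Bb n k t := by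
  have h2 : (0:ℝ) ≤ 1 - t := by linarith
  unfold Bb
  positivity

lemma Bb_sum (n : ℕ) (t : ℝ) : ∑ k ∈ range (n + 1), Bb n k t = 1 := by
  simp only [Bb_eq_eval]
  rw [← Polynomial.eval_finset_sum]
  simp [bernsteinPolynomial.sum]

lemma Bb_sum_mul (n : ℕ) (t : ℝ) :
    ∑ k ∈ range (n + 1), (k : ℝ) * Bb n k t = n * t := by
  have h := congrArg (Polynomial.eval t) (bernsteinPolynomial.sum_smul ℝ n)
  rw [Polynomial.eval_finset_sum] at h
  simp only [Polynomial.eval_smul, nsmul_eq_mul, Polynomial.eval_X] at h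
  simpa [Bb_eq_eval] using h

lemma Bb_variance (n : ℕ) (t : ℝ) :
    ∑ k ∈ range (n + 1), ((n : ℝ) * t - k) ^ 2 * Bb n k t = n * t * (1 - t) := by
  have h := congrArg (Polynomial.eval t) (bernsteinPolynomial.variance ℝ n)
  rw [Polynomial.eval_finset_sum] at h
  simp only [Polynomial.eval_mul, Polynomial.eval_pow, Polynomial.eval_sub,
    Polynomial.eval_smul, nsmul_eq_mul, Polynomial.eval_X, Polynomial.eval_one,
    Polynomial.eval_natCast] at h
  simpa [Bb_eq_eval] using h

lemma Bb_moment1 {n : ℕ} (hn : 1 ≤ n) (t : ℝ) :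
    ∑ k ∈ range (n + 1), ((k : ℝ) / n) * Bb n k t = t := by
  have hn' : (n : ℝ) ≠ 0 := by positivity
  calc ∑ k ∈ range (n + 1), ((k : ℝ) / n) * Bb n k t
      = (∑ k ∈ range (n + 1), (k : ℝ) * Bb n k t) / n := by
        rw [Finset.sum_div]; exact Finset.sum_congr rfl fun k _ => by ring
    _ = (n * t) / n := by rw [Bb_sum_mul]
    _ = t := by field_simp

lemma Bb_var' {n : ℕ} (hn : 1 ≤ n) (t : ℝ) :
    ∑ k ∈ range (n + 1), (t - (k : ℝ) / n) ^ 2 * Bb n k t = t * (1 - t) / n := by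
  have hn' : (n : ℝ) ≠ 0 := by positivity
  have h := Bb_variance n t
  calc ∑ k ∈ range (n + 1), (t - (k : ℝ) / n) ^ 2 * Bb n k t
      = (∑ k ∈ range (n + 1), ((n : ℝ) * t - k) ^ 2 * Bb n k t) / n ^ 2 := by
        rw [Finset.sum_div]
        refine Finset.sum_congr rfl fun k _ => ?_
        rw [eq_div_iff (by positivity)]
        have : (t - (k:ℝ)/n) * n = (n : ℝ) * t - k := by field_simp
        calc (t - (k:ℝ)/n) ^ 2 * Bb n k t * (n:ℝ)^2
            = ((t - (k:ℝ)/n) * n)^2 * Bb n k t := by ring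
          _ = ((n : ℝ) * t - k)^2 * Bb n k t := by rw [this]
    _ = (n * t * (1 - t)) / n ^ 2 := by rw [h]
    _ = t * (1 - t) / n := by field_simp

lemma Bb_moment2 {n : ℕ} (hn : 1 ≤ n) (t : ℝ) :
    ∑ k ∈ range (n + 1), ((k : ℝ) / n) ^ 2 * Bb n k t = t ^ 2 + t * (1 - t) / n := by
  have h0 := Bb_sum n t
  have h1 := Bb_moment1 hn t
  have h2 := Bb_var' hn t
  have expand : ∀ k ∈ range (n + 1),
      (t - (k : ℝ) / n) ^ 2 * Bb n k t =
        ((k : ℝ) / n) ^ 2 * Bb n k t - 2 * t * (((k : ℝ) / n) * Bb n k t) + t ^ 2 * Bb n k t :=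
    fun k _ => by ring
  rw [Finset.sum_congr rfl expand] at h2
  rw [Finset.sum_add_distrib, Finset.sum_sub_distrib, ← Finset.mul_sum, ← Finset.mul_sum,
    h0, h1] at h2
  linarith

lemma inner_sum' {n : ℕ} (hn : 1 ≤ n) (D A t : ℝ) :
    ∑ j ∈ range (n + 1), (D * ((j : ℝ) / n) + A) ^ 2 * Bb n j t
      = (D * t + A) ^ 2 + D ^ 2 * (t * (1 - t) / n) := by
  have h0 := Bb_sum n t
  have h1 := Bb_moment1 hn t
  have h2 := Bb_moment2 hn t
  have expand : ∀ j ∈ range (n + 1),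
      (D * ((j : ℝ) / n) + A) ^ 2 * Bb n j t =
        D ^ 2 * (((j : ℝ) / n) ^ 2 * Bb n j t) + 2 * D * A * (((j : ℝ) / n) * Bb n j t)
          + A ^ 2 * Bb n j t := fun j _ => by ring
  rw [Finset.sum_congr rfl expand, Finset.sum_add_distrib, Finset.sum_add_distrib,
    ← Finset.mul_sum, ← Finset.mul_sum, ← Finset.mul_sum, h0, h1, h2]
  ring

lemma qt_eq {α β b : ℝ} (hαβ : α < β) (hb : 0 < b) {m k : ℕ} (hk : k ≤ m) (x : ℝ) :
    qt α β b m k x = Bb m k ((x - α * b) / ((β - α) * b)) := by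
  set L := (β - α) * b with hLdef
  have hL0 : 0 < L := mul_pos (by linarith) hb
  have hL : L ≠ 0 := ne_of_gt hL0
  set u := (x - α * b) / L with hu
  have hx1 : x - α * b = L * u := by rw [hu]; field_simp
  have hx2 : β * b - x = L * (1 - u) := by
    have : β * b - x = L - (x - α * b) := by rw [hLdef]; ring
    rw [this, hx1]; ring
  have hpow : (β - α) ^ m * b ^ m = L ^ m := by rw [hLdef, mul_pow]
  rw [qt, Bb, hx1, hx2, hpow, mul_pow L u k, mul_pow L (1-u) (m-k)]
  have hLk : L ^ k * L ^ (m - k) = L ^ m := by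
    rw [← pow_add]; congr 1; omega
  have key : (1 / L ^ m) * (L ^ k * L ^ (m - k)) = 1 := by
    rw [hLk]; field_simp
  calc 1 / L ^ m * ↑(m.choose k) * (L ^ k * u ^ k) * (L ^ (m - k) * (1 - u) ^ (m - k))
      = ((1 / L ^ m) * (L ^ k * L ^ (m - k))) *
          (↑(m.choose k) * u ^ k * (1 - u) ^ (m - k)) := by ring
    _ = ↑(m.choose k) * u ^ k * (1 - u) ^ (m - k) := by rw [key]; ring

lemma qy_eq (φ₁ φ₂ : ℝ → ℝ) (x : ℝ) (hx : φ₁ x < φ₂ x) (n j : ℕ) (y : ℝ) :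
    qy φ₁ φ₂ x n j y = Bb n j ((y - φ₁ x) / (φ₂ x - φ₁ x)) := by
  have hD : φ₂ x - φ₁ x ≠ 0 := by linarith
  have : (φ₂ x - y) / (φ₂ x - φ₁ x) = 1 - (y - φ₁ x) / (φ₂ x - φ₁ x) := by
    field_simp
    ring
  rw [qy, Bb, this]

set_option maxHeartbeats 1000000 in
theorem stmt17 (α β : ℝ) (hαβ : α < β) (b : ℕ → ℝ) (hb : ∀ m, 1 ≤ m → 0 < b m)
    (hlim : Filter.Tendsto (fun m : ℕ => (b m) ^ 2 / m) Filter.atTop (nhds 0))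
    (φ₁ φ₂ : ℝ → ℝ)
    (hφ₁bdd : ∃ C, ∀ x, |φ₁ x| ≤ C) (hφ₂bdd : ∃ C, ∀ x, |φ₂ x| ≤ C)
    (hφ₁u : UniformContinuous φ₁) (hφ₂u : UniformContinuous φ₂)
    (hφ : ∀ x, φ₁ x < φ₂ x)
    (mk : ℕ → ℕ → ℕ) (hmk : ∀ m, ∀ k ≤ m, 1 ≤ mk m k)
    (hmkmin : ∀ C : ℕ, ∃ N, ∀ m ≥ N, ∀ k ≤ m, C ≤ mk m k) :
    ∀ ε > 0, ∃ N, ∀ m ≥ N, 1 ≤ m →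
      ∀ x ∈ Set.Icc (α * b m) (β * b m), ∀ y ∈ Set.Icc (φ₁ x) (φ₂ x),
        |BivCl α β (b m) φ₁ φ₂ m (mk m) (fun _ t => t ^ 2) x y - y ^ 2| < ε := by
  intro ε hε
  obtain ⟨C₁, hC₁⟩ := hφ₁bdd
  obtain ⟨C₂, hC₂⟩ := hφ₂bdd
  set C : ℝ := max (max C₁ C₂) 1 with hCdef
  have hC1 : (1 : ℝ) ≤ C := le_max_right _ _
  have hC0 : (0 : ℝ) < C := by linarith
  have hφ₁b : ∀ x, |φ₁ x| ≤ C := fun x =>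
    (hC₁ x).trans (le_trans (le_max_left _ _) (le_max_left _ _))
  have hφ₂b : ∀ x, |φ₂ x| ≤ C := fun x =>
    (hC₂ x).trans (le_trans (le_max_right _ _) (le_max_left _ _))
  -- uniform continuity moduli
  set ε₁ : ℝ := ε / (72 * C) with hε₁def
  have hε₁ : 0 < ε₁ := by positivity
  obtain ⟨δ₁, hδ₁, hucont₁⟩ := Metric.uniformContinuous_iff.mp hφ₁u ε₁ hε₁
  obtain ⟨δ₂, hδ₂, hucont₂⟩ := Metric.uniformContinuous_iff.mp hφ₂u ε₁ hε₁
  set δ : ℝ := min δ₁ δ₂ with hδdef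
  have hδ : 0 < δ := lt_min hδ₁ hδ₂
  -- thresholds
  set η : ℝ := ε * δ ^ 2 / (36 * C ^ 2 * (β - α) ^ 2) with hηdef
  have hη : 0 < η := by
    have : (0:ℝ) < β - α := by linarith
    positivity
  obtain ⟨N₁, hN₁⟩ := Metric.tendsto_atTop.mp hlim η hη
  set K₀ : ℕ := ⌈4 * C ^ 2 / ε⌉₊ with hK₀def
  obtain ⟨N₂, hN₂⟩ := hmkmin K₀
  refine ⟨max N₁ N₂, fun m hm hm1 x hx y hy => ?_⟩
  have hmN₁ : m ≥ N₁ := le_trans (le_max_left _ _) hm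
  have hmN₂ : m ≥ N₂ := le_trans (le_max_right _ _) hm
  have hbm : 0 < b m := hb m hm1
  have hm0 : (0 : ℝ) < m := by exact_mod_cast hm1
  set L : ℝ := (β - α) * b m with hLdef
  have hL0 : 0 < L := mul_pos (by linarith) hbm
  set u : ℝ := (x - α * b m) / L with hudef
  have hu0 : 0 ≤ u := div_nonneg (by linarith [hx.1]) hL0.le
  have hu1 : u ≤ 1 := by
    rw [hudef, div_le_one hL0]
    have := hx.2
    rw [hLdef]; linarith [hx.2]
  have hxu : x - α * b m = L * u := by rw [hudef]; field_simp
  set Dx : ℝ := φ₂ x - φ₁ x with hDxdef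
  have hDx0 : 0 < Dx := by have := hφ x; rw [hDxdef]; linarith
  set v : ℝ := (y - φ₁ x) / (φ₂ x - φ₁ x) with hvdef
  have hv0 : 0 ≤ v := div_nonneg (by linarith [hy.1]) hDx0.le
  have hv1 : v ≤ 1 := by
    rw [hvdef, div_le_one hDx0]
    linarith [hy.2]
  have hyv : y = Dx * v + φ₁ x := by
    rw [hvdef, hDxdef]; field_simp
    rw [mul_div_cancel_left₀ _ (by linarith [hφ x] : φ₂ x - φ₁ x ≠ 0)]; ring
  -- abbreviations depending on k
  set ξ : ℕ → ℝ := fun k => (β - α) * b m * ((k : ℝ) / m) + α * b m with hξdef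
  set Dk : ℕ → ℝ := fun k => φ₂ (ξ k) - φ₁ (ξ k) with hDkdef
  set Ak : ℕ → ℝ := fun k => φ₁ (ξ k) with hAkdef
  set T : ℕ → ℝ := fun k =>
    (Dk k * v + Ak k) ^ 2 + (Dk k) ^ 2 * (v * (1 - v) / (mk m k)) with hTdef
  -- Step A : rewrite the operator
  have key : BivCl α β (b m) φ₁ φ₂ m (mk m) (fun _ t => t ^ 2) x y
      = ∑ k ∈ range (m + 1), T k * Bb m k u := by
    unfold BivCl
    refine Finset.sum_congr rfl fun k hk => ?_
    have hkm : k ≤ m := Nat.lt_succ_iff.mp (Finset.mem_range.mp hk)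
    have hnk : 1 ≤ mk m k := hmk m k hkm
    have hqt : qt α β (b m) m k x = Bb m k u := qt_eq hαβ hbm hkm x
    calc ∑ j ∈ range (mk m k + 1),
          (fun _ t => t ^ 2) (ξ k) ((Dk k) * ((j : ℝ) / mk m k) + Ak k) *
            qt α β (b m) m k x * qy φ₁ φ₂ x (mk m k) j y
        = ∑ j ∈ range (mk m k + 1),
            ((Dk k) * ((j : ℝ) / mk m k) + Ak k) ^ 2 * Bb (mk m k) j v * Bb m k u := by
          refine Finset.sum_congr rfl fun j _ => ?_
          rw [hqt, qy_eq φ₁ φ₂ x (hφ x) (mk m k) j y, ← hvdef]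
          ring
      _ = (∑ j ∈ range (mk m k + 1),
            ((Dk k) * ((j : ℝ) / mk m k) + Ak k) ^ 2 * Bb (mk m k) j v) * Bb m k u := by
          rw [Finset.sum_mul]
      _ = T k * Bb m k u := by rw [inner_sum' hnk (Dk k) (Ak k) v]
  clear_value T Ak Dk ξ v Dx u L η K₀ δ ε₁ C
  -- pointwise estimate
  set P : ℝ := 18 * C * ε₁ + ε / 4 with hPdef
  set Q : ℝ := 36 * C ^ 2 / δ ^ 2 with hQdef
  have hQ0 : 0 ≤ Q := by positivity
  clear_value P Q
  have tri : ∀ a b : ℝ, |a - b| ≤ |a| + |b| := fun a b => by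
    rw [sub_eq_add_neg]
    exact (abs_add_le a (-b)).trans (by rw [abs_neg])
  have hδle1 : δ ≤ δ₁ := by rw [hδdef]; exact min_le_left _ _
  have hδle2 : δ ≤ δ₂ := by rw [hδdef]; exact min_le_right _ _
  have huc1 : ∀ a b' : ℝ, dist a b' < δ → |φ₁ a - φ₁ b'| < ε₁ := fun a b' h => by
    have := hucont₁ (lt_of_lt_of_le h hδle1)
    rwa [Real.dist_eq] at this
  have huc2 : ∀ a b' : ℝ, dist a b' < δ → |φ₂ a - φ₂ b'| < ε₁ := fun a b' h => by
    have := hucont₂ (lt_of_lt_of_le h hδle2)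
    rwa [Real.dist_eq] at this
  have hgb : ∀ (φ : ℝ → ℝ), (∀ z, |φ z| ≤ C) →
      (∀ a b' : ℝ, dist a b' < δ → |φ a - φ b'| < ε₁) →
      ∀ z : ℝ, |φ z - φ x| ≤ ε₁ + (2 * C / δ ^ 2) * (z - x) ^ 2 := by
    intro φ hφb huc z
    by_cases hcase : dist z x < δ
    · have h := (huc _ _ hcase).le
      have h2 : 0 ≤ (2 * C / δ ^ 2) * (z - x) ^ 2 := by positivity
      linarith
    · push_neg at hcase
      rw [Real.dist_eq] at hcase
      have hsq : δ ^ 2 ≤ (z - x) ^ 2 := by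
        nlinarith [sq_abs (z - x), abs_nonneg (z - x)]
      have hb2 : |φ z - φ x| ≤ 2 * C := by
        have h1 := abs_le.mp (hφb z)
        have h2 := abs_le.mp (hφb x)
        rw [abs_le]; constructor <;> linarith
      have hC2 : 2 * C ≤ (2 * C / δ ^ 2) * (z - x) ^ 2 := by
        rw [div_mul_eq_mul_div, le_div_iff₀ (by positivity)]
        have h3 := mul_le_mul_of_nonneg_left hsq (by linarith : (0:ℝ) ≤ 2 * C)
        linarith
      linarith [hε₁.le]
  have pointwise : ∀ k ∈ range (m + 1), |T k - y ^ 2| ≤ P + Q * (ξ k - x) ^ 2 := by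
    intro k hk
    have hkm : k ≤ m := Nat.lt_succ_iff.mp (Finset.mem_range.mp hk)
    have hnk1 : 1 ≤ mk m k := hmk m k hkm
    have hnkK : K₀ ≤ mk m k := hN₂ m hmN₂ k hkm
    have hnkR : (4 * C ^ 2 / ε) ≤ (mk m k : ℝ) := by
      refine le_trans (Nat.le_ceil _) ?_
      rw [← hK₀def]
      exact_mod_cast hnkK
    have hnk0 : (0 : ℝ) < mk m k := by exact_mod_cast hnk1
    have hDkb : |Dk k| ≤ 2 * C := by
      have h1 := abs_le.mp (hφ₁b (ξ k))
      have h2 := abs_le.mp (hφ₂b (ξ k))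
      rw [abs_le]; constructor <;> simp only [hDkdef] <;> linarith
    -- remainder term
    have hrem0 : 0 ≤ (Dk k) ^ 2 * (v * (1 - v) / (mk m k)) := by
      have h0 : 0 ≤ v * (1 - v) := mul_nonneg hv0 (by linarith only [hv1])
      exact mul_nonneg (sq_nonneg _) (div_nonneg h0 (Nat.cast_nonneg _))
    have hrem : (Dk k) ^ 2 * (v * (1 - v) / (mk m k)) ≤ ε / 4 := by
      have h1 : (Dk k) ^ 2 ≤ 4 * C ^ 2 := by
        nlinarith only [sq_abs (Dk k), abs_nonneg (Dk k), hDkb, hC0]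
      have h2 : v * (1 - v) ≤ 1 / 4 := by nlinarith only [sq_nonneg (2 * v - 1)]
      have h4 : C ^ 2 / (mk m k : ℝ) ≤ ε / 4 := by
        rw [div_le_iff₀ hnk0]
        have h5 := mul_le_mul_of_nonneg_left hnkR (by positivity : (0:ℝ) ≤ ε / 4)
        have h6 : ε / 4 * (4 * C ^ 2 / ε) = C ^ 2 := by field_simp
        linarith only [h5, h6]
      calc (Dk k) ^ 2 * (v * (1 - v) / (mk m k))
          ≤ 4 * C ^ 2 * (v * (1 - v) / (mk m k)) := by
            apply mul_le_mul_of_nonneg_right h1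
            have h0' : 0 ≤ v * (1 - v) := mul_nonneg hv0 (by linarith only [hv1])
            positivity
        _ ≤ 4 * C ^ 2 * ((1 / 4) / (mk m k)) := by
            apply mul_le_mul_of_nonneg_left _ (by positivity)
            exact (div_le_div_iff_of_pos_right hnk0).mpr h2
        _ = C ^ 2 / (mk m k) := by ring
        _ ≤ ε / 4 := h4
    -- main term
    set s : ℝ := Dk k * v + Ak k with hsdef
    clear_value s
    have hAkb : |Ak k| ≤ C := by simp only [hAkdef]; exact hφ₁b (ξ k)
    have hsb : |s| ≤ 3 * C := by
      have h1 := abs_le.mp hDkb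
      have h2 := abs_le.mp hAkb
      have p2 : 0 ≤ 2 * C * (1 - v) := mul_nonneg (by linarith only [hC0]) (by linarith only [hv1])
      have pa : 0 ≤ (2 * C - Dk k) * v := mul_nonneg (by linarith only [h1]) hv0
      have pb : 0 ≤ (Dk k + 2 * C) * v := mul_nonneg (by linarith only [h1]) hv0
      have hb1 : Dk k * v ≤ 2 * C := by nlinarith only [pa, p2]
      have hb2 : -(2 * C) ≤ Dk k * v := by nlinarith only [pb, p2]
      rw [hsdef, abs_le]
      constructor <;> [linarith only [hb2, h2]; linarith only [hb1, h2]]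
    have hyb : |y| ≤ C := by
      have h1 := abs_le.mp (hφ₁b x)
      have h2 := abs_le.mp (hφ₂b x)
      rw [abs_le]; constructor <;> [linarith [hy.1]; linarith [hy.2]]
    have hdiff1 : |s - y| ≤ |φ₂ (ξ k) - φ₂ x| + 2 * |φ₁ (ξ k) - φ₁ x| := by
      have hrw : s - y = (φ₂ (ξ k) - φ₂ x) * v - (φ₁ (ξ k) - φ₁ x) * v + (φ₁ (ξ k) - φ₁ x) := by
        rw [hsdef, hyv]; simp only [hDkdef, hAkdef, hDxdef]; ring
      rw [hrw]
      have t1 : |(φ₂ (ξ k) - φ₂ x) * v| ≤ |φ₂ (ξ k) - φ₂ x| := by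
        rw [abs_mul, abs_of_nonneg hv0]
        exact mul_le_of_le_one_right (abs_nonneg _) hv1
      have t2 : |(φ₁ (ξ k) - φ₁ x) * v| ≤ |φ₁ (ξ k) - φ₁ x| := by
        rw [abs_mul, abs_of_nonneg hv0]
        exact mul_le_of_le_one_right (abs_nonneg _) hv1
      calc |(φ₂ (ξ k) - φ₂ x) * v - (φ₁ (ξ k) - φ₁ x) * v + (φ₁ (ξ k) - φ₁ x)|
          ≤ |(φ₂ (ξ k) - φ₂ x) * v - (φ₁ (ξ k) - φ₁ x) * v| + |φ₁ (ξ k) - φ₁ x| :=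
            abs_add_le _ _
        _ ≤ |(φ₂ (ξ k) - φ₂ x) * v| + |(φ₁ (ξ k) - φ₁ x) * v| + |φ₁ (ξ k) - φ₁ x| := by
            linarith [tri ((φ₂ (ξ k) - φ₂ x) * v) ((φ₁ (ξ k) - φ₁ x) * v)]
        _ ≤ |φ₂ (ξ k) - φ₂ x| + 2 * |φ₁ (ξ k) - φ₁ x| := by linarith
    have hsq : |s ^ 2 - y ^ 2| ≤ 6 * C * (|φ₂ (ξ k) - φ₂ x| + 2 * |φ₁ (ξ k) - φ₁ x|) := by
      have h : s ^ 2 - y ^ 2 = (s - y) * (s + y) := by ring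
      have h2 : |s + y| ≤ 6 * C := by
        calc |s + y| ≤ |s| + |y| := abs_add_le _ _
          _ ≤ 6 * C := by linarith only [hsb, hyb, hC0]
      rw [h, abs_mul]
      calc |s - y| * |s + y|
          ≤ (|φ₂ (ξ k) - φ₂ x| + 2 * |φ₁ (ξ k) - φ₁ x|) * (6 * C) :=
            mul_le_mul hdiff1 h2 (abs_nonneg _) (by positivity)
        _ = 6 * C * (|φ₂ (ξ k) - φ₂ x| + 2 * |φ₁ (ξ k) - φ₁ x|) := by ring
    have g1 := hgb φ₁ hφ₁b huc1 (ξ k)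
    have g2 := hgb φ₂ hφ₂b huc2 (ξ k)
    have habs : |T k - y ^ 2| ≤ |s ^ 2 - y ^ 2| + (Dk k) ^ 2 * (v * (1 - v) / (mk m k)) := by
      have hrw : T k - y ^ 2 = (s ^ 2 - y ^ 2) + (Dk k) ^ 2 * (v * (1 - v) / (mk m k)) := by
        simp only [hTdef, hsdef]; ring
      rw [hrw]
      calc |(s ^ 2 - y ^ 2) + (Dk k) ^ 2 * (v * (1 - v) / (mk m k))|
          ≤ |s ^ 2 - y ^ 2| + |(Dk k) ^ 2 * (v * (1 - v) / (mk m k))| := abs_add_le _ _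
        _ = |s ^ 2 - y ^ 2| + (Dk k) ^ 2 * (v * (1 - v) / (mk m k)) := by
            rw [abs_of_nonneg hrem0]
    have hQrw : 6 * C * ((ε₁ + (2 * C / δ ^ 2) * (ξ k - x) ^ 2) +
        2 * (ε₁ + (2 * C / δ ^ 2) * (ξ k - x) ^ 2)) = 18 * C * ε₁ + Q * (ξ k - x) ^ 2 := by
      rw [hQdef]; ring
    have step : |s ^ 2 - y ^ 2| ≤ 18 * C * ε₁ + Q * (ξ k - x) ^ 2 := by
      rw [← hQrw]
      refine hsq.trans ?_
      apply mul_le_mul_of_nonneg_left _ (by positivity)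
      linarith only [g1, g2]
    rw [hPdef]
    linarith only [habs, step, hrem]
  -- summation
  have habs1 : |BivCl α β (b m) φ₁ φ₂ m (mk m) (fun _ t => t ^ 2) x y - y ^ 2|
      ≤ ∑ k ∈ range (m + 1), (P + Q * (ξ k - x) ^ 2) * Bb m k u := by
    rw [key]
    have e0 : (∑ k ∈ range (m + 1), T k * Bb m k u) - y ^ 2
        = ∑ k ∈ range (m + 1), (T k - y ^ 2) * Bb m k u := by
      have e : ∀ k ∈ range (m + 1),
          (T k - y ^ 2) * Bb m k u = T k * Bb m k u - y ^ 2 * Bb m k u := fun k _ => by ring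
      rw [Finset.sum_congr rfl e, Finset.sum_sub_distrib, ← Finset.mul_sum, Bb_sum, mul_one]
    rw [e0]
    refine (Finset.abs_sum_le_sum_abs _ _).trans ?_
    refine Finset.sum_le_sum fun k hk => ?_
    rw [abs_mul, abs_of_nonneg (Bb_nonneg m k hu0 hu1)]
    exact mul_le_mul_of_nonneg_right (pointwise k hk) (Bb_nonneg m k hu0 hu1)
  clear key
  have hsum2 : ∑ k ∈ range (m + 1), (P + Q * (ξ k - x) ^ 2) * Bb m k u
      = P + Q * (L ^ 2 * (u * (1 - u) / m)) := by
    have hξx : ∀ k : ℕ, (ξ k - x) ^ 2 = L ^ 2 * ((u - (k : ℝ) / m) ^ 2) := by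
      intro k
      have h1 : ξ k - x = L * ((k : ℝ) / m) - (x - α * b m) := by
        simp only [hξdef, hLdef]; ring
      rw [hxu] at h1
      rw [h1]; ring
    have e : ∀ k ∈ range (m + 1), (P + Q * (ξ k - x) ^ 2) * Bb m k u
        = P * Bb m k u + Q * L ^ 2 * ((u - (k : ℝ) / m) ^ 2 * Bb m k u) := by
      intro k _
      rw [hξx k]; ring
    rw [Finset.sum_congr rfl e, Finset.sum_add_distrib, ← Finset.mul_sum, ← Finset.mul_sum,
      Bb_sum, Bb_var' hm1 u, mul_one]
    ring
  -- final numeric bound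
  have h18 : 18 * C * ε₁ = ε / 4 := by
    rw [hε₁def]; field_simp; ring
  have hW : (b m) ^ 2 / m < η := by
    have h := hN₁ m hmN₁
    rw [Real.dist_eq, sub_zero] at h
    exact lt_of_le_of_lt (le_abs_self _) h
  have hW0 : 0 ≤ (b m) ^ 2 / m := by positivity
  have hL2 : L ^ 2 * (u * (1 - u) / m) ≤ (β - α) ^ 2 * ((b m) ^ 2 / m) / 4 := by
    have huu : u * (1 - u) ≤ 1 / 4 := by nlinarith only [sq_nonneg (2 * u - 1)]
    calc L ^ 2 * (u * (1 - u) / m)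
        = ((β - α) ^ 2 * (b m) ^ 2 / m) * (u * (1 - u)) := by rw [hLdef]; ring
      _ ≤ ((β - α) ^ 2 * (b m) ^ 2 / m) * (1 / 4) := by
          apply mul_le_mul_of_nonneg_left huu
          positivity
      _ = (β - α) ^ 2 * ((b m) ^ 2 / m) / 4 := by ring
  have hQη : Q * ((β - α) ^ 2 * η / 4) = ε / 4 := by
    have hβα : β - α ≠ 0 := by intro h; linarith [hαβ]
    rw [hQdef, hηdef]
    field_simp
  have hfin2 : Q * (L ^ 2 * (u * (1 - u) / m)) ≤ ε / 4 := by
    calc Q * (L ^ 2 * (u * (1 - u) / m))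
        ≤ Q * ((β - α) ^ 2 * ((b m) ^ 2 / m) / 4) := mul_le_mul_of_nonneg_left hL2 hQ0
      _ ≤ Q * ((β - α) ^ 2 * η / 4) := by
          apply mul_le_mul_of_nonneg_left _ hQ0
          have h7 := mul_le_mul_of_nonneg_left hW.le (by positivity : (0:ℝ) ≤ (β - α) ^ 2 / 4)
          linarith only [h7]
      _ = ε / 4 := hQη
  have : |BivCl α β (b m) φ₁ φ₂ m (mk m) (fun _ t => t ^ 2) x y - y ^ 2|
      ≤ P + Q * (L ^ 2 * (u * (1 - u) / m)) := by rw [← hsum2]; exact habs1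
  rw [hPdef] at this
  linarith only [this, h18, hfin2, hε]
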